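/- For a hyperbolic regular n-gon of area a (n ≥ 3, 0 ≤ a < (n−2)π), the perimeter is Perim(n,a) = 2n·arcosh(cos(π/n)/sin(((n−2)π − a)/(2n))). For fixed a > 0, Perim(n,a) is strictly decreasing in n; for fixed n, Perim(n,a) is strictly increasing in a. -/

import Mathlib

open Real

noncomputable def arcosh (x : ℝ) : ℝ := Real.log (x + Real.sqrt (x ^ 2 - 1))

/-- Perimeter of the regular hyperbolic `n`-gon of area `a`. -/
noncomputable def Perim (n a : ℝ) : ℝ :=
  2 * n * _root_.arcosh (Real.cos (π / n) / Real.sin (((n - 2) * π - a) / (2 * n)))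

namespace StmtAux

lemma arcosh_one : _root_.arcosh 1 = 0 := by simp [_root_.arcosh]

lemma arcosh_lt_arcosh {x y : ℝ} (hx : 1 ≤ x) (hxy : x < y) : _root_.arcosh x < _root_.arcosh y := by
  have hx0 : (0:ℝ) < x := lt_of_lt_of_le one_pos hx
  have h1 : (0:ℝ) < x + Real.sqrt (x ^ 2 - 1) :=
    add_pos_of_pos_of_nonneg hx0 (Real.sqrt_nonneg _)
  have h2 : x + Real.sqrt (x ^ 2 - 1) < y + Real.sqrt (y ^ 2 - 1) :=
    add_lt_add_of_lt_of_le hxy (Real.sqrt_le_sqrt (by nlinarith))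
  exact Real.log_lt_log h1 h2

lemma hasDerivAt_arcosh {x : ℝ} (hx : 1 < x) :
    HasDerivAt _root_.arcosh (1 / Real.sqrt (x ^ 2 - 1)) x := by
  have hx2 : (0:ℝ) < x ^ 2 - 1 := by nlinarith
  have hs : (0:ℝ) < Real.sqrt (x ^ 2 - 1) := Real.sqrt_pos.2 hx2
  have h1 : HasDerivAt (fun y : ℝ => y ^ 2 - 1) (2 * x) x := by
    simpa using (hasDerivAt_pow 2 x).sub_const 1
  have h2 : HasDerivAt (fun y : ℝ => Real.sqrt (y ^ 2 - 1))
      (1 / (2 * Real.sqrt (x ^ 2 - 1)) * (2 * x)) x :=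
    (Real.hasDerivAt_sqrt (ne_of_gt hx2)).comp x h1
  have h3 : HasDerivAt (fun y : ℝ => y + Real.sqrt (y ^ 2 - 1))
      (1 + 1 / (2 * Real.sqrt (x ^ 2 - 1)) * (2 * x)) x := (hasDerivAt_id x).add h2
  have h4 : (0:ℝ) < x + Real.sqrt (x ^ 2 - 1) :=
    add_pos_of_pos_of_nonneg (by linarith) (Real.sqrt_nonneg _)
  have h5 : HasDerivAt _root_.arcosh _ x := (Real.hasDerivAt_log (ne_of_gt h4)).comp x h3
  have h6 : Real.sqrt (x ^ 2 - 1) * Real.sqrt (x ^ 2 - 1) = x ^ 2 - 1 :=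
    Real.mul_self_sqrt hx2.le
  convert h5 using 1
  field_simp
  nlinarith [hs, h6]

lemma hasDerivAt_sin_lin (c t : ℝ) :
    HasDerivAt (fun θ : ℝ => Real.sin (c * θ)) (Real.cos (c * t) * c) t := by
  simpa [Function.comp_def] using (Real.hasDerivAt_sin (c * t)).comp t ((hasDerivAt_id t).const_mul c)

lemma hasDerivAt_cos_lin (c t : ℝ) :
    HasDerivAt (fun θ : ℝ => Real.cos (c * θ)) (-Real.sin (c * t) * c) t := by
  simpa [Function.comp_def] using (Real.hasDerivAt_cos (c * t)).comp t ((hasDerivAt_id t).const_mul c)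

variable {k : ℝ}

lemma theta_lt (hk : 1 < k) {θ : ℝ} (h0 : 0 < θ) : θ < k * θ := by nlinarith

lemma sinA_pos (hk : 1 < k) {θ : ℝ} (h0 : 0 < θ) (h1 : k * θ < π / 2) :
    0 < Real.sin ((k + 1) * θ) := by
  have h2 : θ < k * θ := theta_lt hk h0
  apply Real.sin_pos_of_pos_of_lt_pi (by nlinarith)
  nlinarith [Real.pi_pos]

lemma sinB_pos (hk : 1 < k) {θ : ℝ} (h0 : 0 < θ) (h1 : k * θ < π / 2) :
    0 < Real.sin ((k - 1) * θ) := by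
  apply Real.sin_pos_of_pos_of_lt_pi (by nlinarith)
  nlinarith [Real.pi_pos]

lemma cosk_pos (hk : 1 < k) {θ : ℝ} (h0 : 0 < θ) (h1 : k * θ < π / 2) :
    0 < Real.cos (k * θ) :=
  Real.cos_pos_of_mem_Ioo ⟨by nlinarith [Real.pi_pos], h1⟩

/-- `W` function used to show the sine ratio is decreasing. -/
lemma W_pos (hk : 1 < k) {θ : ℝ} (h0 : 0 < θ) (h1 : k * θ < π / 2) :
    (k + 1) * Real.cos ((k + 1) * θ) * Real.sin ((k - 1) * θ) <
      (k - 1) * Real.sin ((k + 1) * θ) * Real.cos ((k - 1) * θ) := by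
  have hk0 : 0 < k := by linarith
  set X := π / (2 * k) with hX
  have hXpos : 0 < X := by positivity
  have hθX : θ < X := by
    rw [hX, lt_div_iff₀ (by positivity)]
    nlinarith
  set W : ℝ → ℝ := fun t =>
    (k - 1) * (Real.sin ((k + 1) * t) * Real.cos ((k - 1) * t)) -
      (k + 1) * (Real.cos ((k + 1) * t) * Real.sin ((k - 1) * t)) with hW
  have hder : ∀ t : ℝ, HasDerivAt W
      (4 * k * (Real.sin ((k + 1) * t) * Real.sin ((k - 1) * t))) t := by
    intro t
    have h1 : HasDerivAt W _ t := (((hasDerivAt_sin_lin (k + 1) t).mul (hasDerivAt_cos_lin (k - 1) t)).const_mul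
      (k - 1)).sub (((hasDerivAt_cos_lin (k + 1) t).mul (hasDerivAt_sin_lin (k - 1) t)).const_mul
      (k + 1))
    convert h1 using 1
    ring
  have hmono : StrictMonoOn W (Set.Icc 0 X) := by
    apply strictMonoOn_of_deriv_pos (convex_Icc _ _)
    · exact (Continuous.continuousOn (by continuity))
    · intro x hx
      rw [interior_Icc] at hx
      rw [(hder x).deriv]
      have hx1 : k * x < π / 2 := by
        rw [hX] at hx
        have := hx.2
        rw [lt_div_iff₀ (by positivity)] at this
        nlinarith
      have hA := sinA_pos hk hx.1 hx1
      have hB := sinB_pos hk hx.1 hx1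
      have : (0:ℝ) < 4 * k := by nlinarith
      exact mul_pos this (mul_pos hA hB)
  have h00 : W 0 = 0 := by simp [hW]
  have := hmono (Set.left_mem_Icc.2 hXpos.le) ⟨h0.le, hθX.le⟩ h0
  rw [h00] at this
  simp only [hW] at this
  linarith

/-- bound: `(k-1) sin((k+1)θ) < (k+1) sin((k-1)θ)`. -/
lemma U_pos (hk : 1 < k) {θ : ℝ} (h0 : 0 < θ) (h1 : k * θ < π / 2) :
    (k - 1) * Real.sin ((k + 1) * θ) < (k + 1) * Real.sin ((k - 1) * θ) := by
  have hk0 : 0 < k := by linarith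
  set X := π / (2 * k) with hX
  have hXpos : 0 < X := by positivity
  have hθX : θ < X := by
    rw [hX, lt_div_iff₀ (by positivity)]
    nlinarith
  set U : ℝ → ℝ := fun t =>
    (k + 1) * Real.sin ((k - 1) * t) - (k - 1) * Real.sin ((k + 1) * t) with hU
  have hder : ∀ t : ℝ, HasDerivAt U
      ((k + 1) * (k - 1) * (Real.cos ((k - 1) * t) - Real.cos ((k + 1) * t))) t := by
    intro t
    have h1 : HasDerivAt U _ t := ((hasDerivAt_sin_lin (k - 1) t).const_mul (k + 1)).sub
      ((hasDerivAt_sin_lin (k + 1) t).const_mul (k - 1))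
    convert h1 using 1
    ring
  have hmono : StrictMonoOn U (Set.Icc 0 X) := by
    apply strictMonoOn_of_deriv_pos (convex_Icc _ _)
    · exact (Continuous.continuousOn (by continuity))
    · intro x hx
      rw [interior_Icc] at hx
      rw [(hder x).deriv]
      have hx1 : k * x < π / 2 := by
        rw [hX] at hx
        have := hx.2
        rw [lt_div_iff₀ (by positivity)] at this
        nlinarith
      have hxk : x < k * x := theta_lt hk hx.1
      have hcos : Real.cos ((k + 1) * x) < Real.cos ((k - 1) * x) := by
        apply Real.cos_lt_cos_of_nonneg_of_le_pi (by nlinarith)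
        · nlinarith [Real.pi_pos]
        · nlinarith
      have h3 : 0 < Real.cos ((k - 1) * x) - Real.cos ((k + 1) * x) := by linarith
      have h4 : (0:ℝ) < (k + 1) * (k - 1) := by nlinarith
      exact mul_pos h4 h3
  have h00 : U 0 = 0 := by simp [hU]
  have := hmono (Set.left_mem_Icc.2 hXpos.le) ⟨h0.le, hθX.le⟩ h0
  rw [h00] at this
  simp only [hU] at this
  linarith

/-- The ratio `sin((k+1)θ)/sin((k-1)θ)` is strictly decreasing (cross-multiplied form). -/
lemma ratio_anti (hk : 1 < k) {θ₁ θ₂ : ℝ} (h0 : 0 < θ₁) (h12 : θ₁ < θ₂)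
    (h2 : k * θ₂ < π / 2) :
    Real.sin ((k + 1) * θ₂) * Real.sin ((k - 1) * θ₁) <
      Real.sin ((k + 1) * θ₁) * Real.sin ((k - 1) * θ₂) := by
  have hk0 : 0 < k := by linarith
  set X := π / (2 * k) with hX
  have hθ2X : θ₂ < X := by
    rw [hX, lt_div_iff₀ (by positivity)]
    nlinarith
  set r : ℝ → ℝ := fun t => Real.sin ((k + 1) * t) / Real.sin ((k - 1) * t) with hr
  have hanti : StrictAntiOn r (Set.Ioo 0 X) := by
    apply strictAntiOn_of_deriv_neg (convex_Ioo _ _)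
    · apply ContinuousOn.div
      · exact (Continuous.continuousOn (by continuity))
      · exact (Continuous.continuousOn (by continuity))
      · intro x hx
        have hx1 : k * x < π / 2 := by
          have := hx.2
          rw [hX, lt_div_iff₀ (by positivity)] at this
          nlinarith
        exact (sinB_pos hk hx.1 hx1).ne'
    · intro x hx
      rw [interior_Ioo] at hx
      have hx1 : k * x < π / 2 := by
        have := hx.2
        rw [hX, lt_div_iff₀ (by positivity)] at this
        nlinarith
      have hB := sinB_pos hk hx.1 hx1
      have hd : HasDerivAt r ((Real.cos ((k + 1) * x) * (k + 1) * Real.sin ((k - 1) * x) -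
          Real.sin ((k + 1) * x) * (Real.cos ((k - 1) * x) * (k - 1))) /
          (Real.sin ((k - 1) * x)) ^ 2) x :=
        (hasDerivAt_sin_lin (k + 1) x).div (hasDerivAt_sin_lin (k - 1) x) hB.ne'
      rw [hd.deriv]
      apply div_neg_of_neg_of_pos
      · have := W_pos hk hx.1 hx1
        nlinarith
      · positivity
  have h01 : θ₁ ∈ Set.Ioo 0 X := ⟨h0, h12.trans hθ2X⟩
  have h02 : θ₂ ∈ Set.Ioo 0 X := ⟨h0.trans h12, hθ2X⟩
  have := hanti h01 h02 h12
  simp only [hr] at this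
  have hx1 : k * θ₁ < π / 2 := by nlinarith
  have hB1 := sinB_pos hk h0 hx1
  have hB2 := sinB_pos hk (h0.trans h12) h2
  rw [div_lt_div_iff₀ hB2 hB1] at this
  linarith

/-- The derivative of `F`. -/
noncomputable def phi (k θ : ℝ) : ℝ :=
  ((k - 1) / 2 * Real.sin ((k + 1) * θ) + (k + 1) / 2 * Real.sin ((k - 1) * θ)) /
    (Real.sqrt (Real.sin ((k + 1) * θ)) * Real.sqrt (Real.sin ((k - 1) * θ)) * Real.cos (k * θ))

lemma cos_lt_cos_theta (hk : 1 < k) {θ : ℝ} (h0 : 0 < θ) (h1 : k * θ < π / 2) :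
    Real.cos (k * θ) < Real.cos θ := by
  apply Real.cos_lt_cos_of_nonneg_of_le_pi h0.le
  · nlinarith [Real.pi_pos]
  · exact theta_lt hk h0

lemma prod_eq (hk : 1 < k) (θ : ℝ) :
    Real.sin ((k + 1) * θ) * Real.sin ((k - 1) * θ) =
      Real.cos θ ^ 2 - Real.cos (k * θ) ^ 2 := by
  have e1 : (k + 1) * θ = k * θ + θ := by ring
  have e2 : (k - 1) * θ = k * θ - θ := by ring
  rw [e1, e2, Real.sin_add, Real.sin_sub]
  have h1 := Real.sin_sq_add_cos_sq (k * θ)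
  have h2 := Real.sin_sq_add_cos_sq θ
  nlinarith

lemma hasDerivAt_F (hk : 1 < k) {θ : ℝ} (h0 : 0 < θ) (h1 : k * θ < π / 2) :
    HasDerivAt (fun t : ℝ => _root_.arcosh (Real.cos t / Real.cos (k * t))) (phi k θ) θ := by
  have hc : 0 < Real.cos (k * θ) := cosk_pos hk h0 h1
  have hcc : Real.cos (k * θ) < Real.cos θ := cos_lt_cos_theta hk h0 h1
  have hu1 : 1 < Real.cos θ / Real.cos (k * θ) := (one_lt_div hc).2 hcc
  have hu : HasDerivAt (fun t : ℝ => Real.cos t / Real.cos (k * t))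
      ((-Real.sin θ * Real.cos (k * θ) - Real.cos θ * (-Real.sin (k * θ) * k)) /
        (Real.cos (k * θ)) ^ 2) θ :=
    (Real.hasDerivAt_cos θ).div (hasDerivAt_cos_lin k θ) hc.ne'
  have hF0 : HasDerivAt (_root_.arcosh ∘ fun t : ℝ => Real.cos t / Real.cos (k * t)) _ θ :=
    (hasDerivAt_arcosh hu1).comp θ hu
  have hF : HasDerivAt (fun t : ℝ => _root_.arcosh (Real.cos t / Real.cos (k * t))) _ θ := hF0
  convert hF using 1
  -- now prove phi k θ equals the chain-rule expression
  have hA := sinA_pos hk h0 h1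
  have hB := sinB_pos hk h0 h1
  have hra : 0 < Real.sqrt (Real.sin ((k + 1) * θ)) := Real.sqrt_pos.2 hA
  have hrb : 0 < Real.sqrt (Real.sin ((k - 1) * θ)) := Real.sqrt_pos.2 hB
  have hsq : (Real.cos θ / Real.cos (k * θ)) ^ 2 - 1 =
      Real.sin ((k + 1) * θ) * Real.sin ((k - 1) * θ) / (Real.cos (k * θ)) ^ 2 := by
    rw [prod_eq hk]
    field_simp
  have hsqrt : Real.sqrt ((Real.cos θ / Real.cos (k * θ)) ^ 2 - 1) =
      Real.sqrt (Real.sin ((k + 1) * θ)) * Real.sqrt (Real.sin ((k - 1) * θ)) /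
        Real.cos (k * θ) := by
    rw [hsq, Real.sqrt_div (by positivity), Real.sqrt_mul hA.le,
      Real.sqrt_sq hc.le]
  have hnum : (k - 1) / 2 * Real.sin ((k + 1) * θ) + (k + 1) / 2 * Real.sin ((k - 1) * θ) =
      k * Real.cos θ * Real.sin (k * θ) - Real.sin θ * Real.cos (k * θ) := by
    have e1 : (k + 1) * θ = k * θ + θ := by ring
    have e2 : (k - 1) * θ = k * θ - θ := by ring
    rw [e1, e2, Real.sin_add, Real.sin_sub]; ring
  simp only [phi]
  rw [hsqrt, hnum]
  field_simp
  ring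

lemma phi_lt (hk : 1 < k) {θ₁ θ₂ : ℝ} (h0 : 0 < θ₁) (h12 : θ₁ < θ₂)
    (h2 : k * θ₂ < π / 2) : phi k θ₁ < phi k θ₂ := by
  have hk0 : 0 < k := by linarith
  have h1 : k * θ₁ < π / 2 := by nlinarith [mul_pos hk0 (sub_pos.2 h12)]
  have h02 : 0 < θ₂ := h0.trans h12
  have hA1 := sinA_pos hk h0 h1
  have hB1 := sinB_pos hk h0 h1
  have hA2 := sinA_pos hk h02 h2
  have hB2 := sinB_pos hk h02 h2
  have hc1 := cosk_pos hk h0 h1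
  have hc2 := cosk_pos hk h02 h2
  have hcc : Real.cos (k * θ₂) < Real.cos (k * θ₁) := by
    apply Real.cos_lt_cos_of_nonneg_of_le_pi (mul_nonneg hk0.le h0.le)
    · linarith [Real.pi_pos]
    · exact mul_lt_mul_of_pos_left h12 hk0
  set ra1 := Real.sqrt (Real.sin ((k + 1) * θ₁)) with hra1
  set rb1 := Real.sqrt (Real.sin ((k - 1) * θ₁)) with hrb1
  set ra2 := Real.sqrt (Real.sin ((k + 1) * θ₂)) with hra2
  set rb2 := Real.sqrt (Real.sin ((k - 1) * θ₂)) with hrb2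
  have hra1p : 0 < ra1 := Real.sqrt_pos.2 hA1
  have hrb1p : 0 < rb1 := Real.sqrt_pos.2 hB1
  have hra2p : 0 < ra2 := Real.sqrt_pos.2 hA2
  have hrb2p : 0 < rb2 := Real.sqrt_pos.2 hB2
  have hsq_a1 : ra1 ^ 2 = Real.sin ((k + 1) * θ₁) := Real.sq_sqrt hA1.le
  have hsq_b1 : rb1 ^ 2 = Real.sin ((k - 1) * θ₁) := Real.sq_sqrt hB1.le
  have hsq_a2 : ra2 ^ 2 = Real.sin ((k + 1) * θ₂) := Real.sq_sqrt hA2.le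
  have hsq_b2 : rb2 ^ 2 = Real.sin ((k - 1) * θ₂) := Real.sq_sqrt hB2.le
  have hkey1 : ra2 * rb1 < ra1 * rb2 := by
    have h := ratio_anti hk h0 h12 h2
    rw [hra1, hrb1, hra2, hrb2, ← Real.sqrt_mul hA2.le, ← Real.sqrt_mul hA1.le]
    exact Real.sqrt_lt_sqrt (mul_pos hA2 hB1).le h
  have hkey2 : (k - 1) / 2 * (ra1 * ra2) < (k + 1) / 2 * (rb1 * rb2) := by
    have hb1 := U_pos hk h0 h1
    have hb2 := U_pos hk h02 h2
    have hsq : ((k - 1) / 2 * (ra1 * ra2)) ^ 2 < ((k + 1) / 2 * (rb1 * rb2)) ^ 2 := by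
      have e1 : ((k - 1) / 2 * (ra1 * ra2)) ^ 2 =
          ((k - 1) / 2 * Real.sin ((k + 1) * θ₁)) * ((k - 1) / 2 * Real.sin ((k + 1) * θ₂)) := by
        rw [← hsq_a1, ← hsq_a2]; ring
      have e2 : ((k + 1) / 2 * (rb1 * rb2)) ^ 2 =
          ((k + 1) / 2 * Real.sin ((k - 1) * θ₁)) * ((k + 1) / 2 * Real.sin ((k - 1) * θ₂)) := by
        rw [← hsq_b1, ← hsq_b2]; ring
      rw [e1, e2]
      have c1 : (k - 1) / 2 * Real.sin ((k + 1) * θ₁) < (k + 1) / 2 * Real.sin ((k - 1) * θ₁) := by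
        linarith
      have c2 : (k - 1) / 2 * Real.sin ((k + 1) * θ₂) < (k + 1) / 2 * Real.sin ((k - 1) * θ₂) := by
        linarith
      have c3 : 0 ≤ (k - 1) / 2 * Real.sin ((k + 1) * θ₂) := mul_nonneg (by linarith) hA2.le
      have c4 : 0 < (k + 1) / 2 * Real.sin ((k - 1) * θ₁) := mul_pos (by linarith) hB1
      exact mul_lt_mul' c1.le c2 c3 c4
    exact lt_of_pow_lt_pow_left₀ 2 (mul_nonneg (by linarith) (mul_pos hrb1p hrb2p).le) hsq
  have hN2 : 0 < (k - 1) / 2 * Real.sin ((k + 1) * θ₂) + (k + 1) / 2 * Real.sin ((k - 1) * θ₂) :=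
    add_pos (mul_pos (by linarith) hA2) (mul_pos (by linarith) hB2)
  have hstep : ((k - 1) / 2 * Real.sin ((k + 1) * θ₁) + (k + 1) / 2 * Real.sin ((k - 1) * θ₁)) /
      (ra1 * rb1) <
      ((k - 1) / 2 * Real.sin ((k + 1) * θ₂) + (k + 1) / 2 * Real.sin ((k - 1) * θ₂)) /
      (ra2 * rb2) := by
    rw [div_lt_div_iff₀ (mul_pos hra1p hrb1p) (mul_pos hra2p hrb2p), ← hsq_a1, ← hsq_b1,
      ← hsq_a2, ← hsq_b2]
    nlinarith [mul_pos (sub_pos.2 hkey1) (sub_pos.2 hkey2)]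
  simp only [phi]
  rw [← hra1, ← hrb1, ← hra2, ← hrb2]
  have edd : ∀ N x y c : ℝ, N / (x * y * c) = N / (x * y) / c := by
    intros; rw [div_div]
  rw [edd, edd]
  calc ((k - 1) / 2 * Real.sin ((k + 1) * θ₁) + (k + 1) / 2 * Real.sin ((k - 1) * θ₁)) /
        (ra1 * rb1) / Real.cos (k * θ₁)
      < ((k - 1) / 2 * Real.sin ((k + 1) * θ₂) + (k + 1) / 2 * Real.sin ((k - 1) * θ₂)) /
        (ra2 * rb2) / Real.cos (k * θ₁) := by
        exact div_lt_div_of_pos_right hstep hc1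
      _ < _ :=
        div_lt_div_of_pos_left (div_pos hN2 (mul_pos hra2p hrb2p)) hc2 hcc

lemma F_cont (hk : 1 < k) {θ₁ : ℝ} (h0 : 0 < θ₁) (h1 : k * θ₁ < π / 2) :
    ContinuousOn (fun t : ℝ => _root_.arcosh (Real.cos t / Real.cos (k * t))) (Set.Icc 0 θ₁) := by
  have hk0 : 0 < k := by linarith
  have hcos : ∀ x ∈ Set.Icc (0:ℝ) θ₁, 0 < Real.cos (k * x) := by
    intro x hx
    apply Real.cos_pos_of_mem_Ioo
    constructor
    · have : 0 ≤ k * x := mul_nonneg hk0.le hx.1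
      linarith [Real.pi_pos]
    · have : k * x ≤ k * θ₁ := mul_le_mul_of_nonneg_left hx.2 hk0.le
      linarith
  have hu : ContinuousOn (fun t : ℝ => Real.cos t / Real.cos (k * t)) (Set.Icc 0 θ₁) := by
    apply ContinuousOn.div
    · exact Real.continuous_cos.continuousOn
    · exact (Real.continuous_cos.comp (continuous_const.mul continuous_id)).continuousOn
    · exact fun x hx => (hcos x hx).ne'
  have hu1 : ∀ x ∈ Set.Icc (0:ℝ) θ₁, 1 ≤ Real.cos x / Real.cos (k * x) := by
    intro x hx
    rw [one_le_div (hcos x hx)]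
    apply Real.cos_le_cos_of_nonneg_of_le_pi hx.1
    · have : k * x ≤ k * θ₁ := mul_le_mul_of_nonneg_left hx.2 hk0.le
      linarith [Real.pi_pos]
    · nlinarith [hx.1, hk]
  show ContinuousOn (fun t : ℝ =>
    Real.log (Real.cos t / Real.cos (k * t) +
      Real.sqrt ((Real.cos t / Real.cos (k * t)) ^ 2 - 1))) (Set.Icc 0 θ₁)
  apply ContinuousOn.log
  · exact hu.add (Real.continuous_sqrt.comp_continuousOn ((hu.pow 2).sub continuousOn_const))
  · intro x hx
    have h1 := hu1 x hx
    have h2 := Real.sqrt_nonneg ((Real.cos x / Real.cos (k * x)) ^ 2 - 1)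
    positivity

lemma slope_lt (hk : 1 < k) {θ₁ θ₂ : ℝ} (h02 : 0 < θ₂) (h21 : θ₂ < θ₁)
    (h1 : k * θ₁ < π / 2) :
    _root_.arcosh (Real.cos θ₂ / Real.cos (k * θ₂)) <
      θ₂ / θ₁ * _root_.arcosh (Real.cos θ₁ / Real.cos (k * θ₁)) := by
  have hk0 : 0 < k := by linarith
  have h01 : 0 < θ₁ := h02.trans h21
  have hconv : StrictConvexOn ℝ (Set.Icc 0 θ₁)
      (fun t : ℝ => _root_.arcosh (Real.cos t / Real.cos (k * t))) := by
    apply StrictMonoOn.strictConvexOn_of_deriv (convex_Icc _ _) (F_cont hk h01 h1)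
    rw [interior_Icc]
    intro x hx y hy hxy
    have hxk : k * x < π / 2 := by nlinarith [mul_pos hk0 (sub_pos.2 hx.2)]
    have hyk : k * y < π / 2 := by nlinarith [mul_pos hk0 (sub_pos.2 hy.2)]
    rw [(hasDerivAt_F hk hx.1 hxk).deriv, (hasDerivAt_F hk hy.1 hyk).deriv]
    exact phi_lt hk hx.1 hxy hyk
  have h0mem : (0:ℝ) ∈ Set.Icc (0:ℝ) θ₁ := Set.left_mem_Icc.2 h01.le
  have h1mem : θ₁ ∈ Set.Icc (0:ℝ) θ₁ := Set.right_mem_Icc.2 h01.le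
  have hne : (0:ℝ) ≠ θ₁ := h01.ne
  have ha : 0 < 1 - θ₂ / θ₁ := by
    rw [sub_pos]
    exact (div_lt_one h01).2 h21
  have hb : 0 < θ₂ / θ₁ := div_pos h02 h01
  have hab : (1 - θ₂ / θ₁) + θ₂ / θ₁ = 1 := by ring
  have h := hconv.2 h0mem h1mem hne ha hb hab
  simp only [smul_eq_mul, mul_zero, zero_add] at h
  rw [div_mul_cancel₀ _ h01.ne'] at h
  have hF0 : _root_.arcosh (Real.cos 0 / Real.cos 0) = 0 := by
    norm_num [Real.cos_zero, arcosh_one]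
  rw [hF0, mul_zero, zero_add] at h
  exact h

lemma Perim_eq {n a : ℝ} (hn : 0 < n) : Perim n a =
    2 * n * _root_.arcosh (Real.cos (π / n) / Real.cos ((1 + a / (2 * π)) * (π / n))) := by
  have hπ := Real.pi_pos
  have harg : ((n - 2) * π - a) / (2 * n) = π / 2 - (1 + a / (2 * π)) * (π / n) := by
    field_simp
    ring
  rw [Perim, harg, Real.sin_pi_div_two_sub]

end StmtAux

open StmtAux in
theorem stmt_5 :
    (∀ a : ℝ, 0 < a → ∀ n₁ n₂ : ℝ, 2 < n₁ → a < (n₁ - 2) * π → n₁ < n₂ →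
      Perim n₂ a < Perim n₁ a) ∧
    (∀ n : ℝ, 2 < n → ∀ a₁ a₂ : ℝ, 0 ≤ a₁ → a₁ < a₂ → a₂ < (n - 2) * π →
      Perim n a₁ < Perim n a₂) := by
  have hπ := Real.pi_pos
  constructor
  · intro a ha n₁ n₂ hn₁ ha2 hn12
    have hn₁0 : 0 < n₁ := by linarith
    have hn₂0 : 0 < n₂ := by linarith
    have hk : 1 < 1 + a / (2 * π) := by
      have : 0 < a / (2 * π) := by positivity
      linarith
    have hθ₂ : 0 < π / n₂ := by positivity
    have h21 : π / n₂ < π / n₁ := div_lt_div_of_pos_left hπ hn₁0 hn12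
    have hkθ₁ : (1 + a / (2 * π)) * (π / n₁) < π / 2 := by
      have e : (1 + a / (2 * π)) * (π / n₁) = (2 * π + a) / (2 * n₁) := by
        field_simp
      rw [e, div_lt_div_iff₀ (by positivity) (by norm_num)]
      nlinarith
    have hkey := slope_lt hk hθ₂ h21 hkθ₁
    rw [Perim_eq hn₁0, Perim_eq hn₂0]
    have h2 : 2 * n₂ * _root_.arcosh (Real.cos (π / n₂) /
          Real.cos ((1 + a / (2 * π)) * (π / n₂))) <
        2 * n₂ * (π / n₂ / (π / n₁) *
          _root_.arcosh (Real.cos (π / n₁) / Real.cos ((1 + a / (2 * π)) * (π / n₁)))) :=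
      mul_lt_mul_of_pos_left hkey (by positivity)
    have h3 : 2 * n₂ * (π / n₂ / (π / n₁) *
          _root_.arcosh (Real.cos (π / n₁) / Real.cos ((1 + a / (2 * π)) * (π / n₁)))) =
        2 * n₁ * _root_.arcosh (Real.cos (π / n₁) / Real.cos ((1 + a / (2 * π)) * (π / n₁))) := by
      have e : π / n₂ / (π / n₁) = n₁ / n₂ := by
        field_simp
      rw [e]
      field_simp
    linarith
  · intro n hn a₁ a₂ ha₁ h12 ha₂
    have hn0 : 0 < n := by linarith
    have hθ : 0 < π / n := by positivity
    have ha₂0 : 0 < a₂ := lt_of_le_of_lt ha₁ h12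
    have hd1 : 0 ≤ a₁ / (2 * π) := div_nonneg ha₁ (by positivity)
    have hd2 : 0 < a₂ / (2 * π) := by positivity
    have hk₁ : 1 ≤ 1 + a₁ / (2 * π) := by
      have : 0 ≤ a₁ / (2 * π) := by positivity
      linarith
    have hkk : 1 + a₁ / (2 * π) < 1 + a₂ / (2 * π) := by
      have : a₁ / (2 * π) < a₂ / (2 * π) := by
        apply div_lt_div_of_pos_right h12 (by positivity)
      linarith
    have hk₂θ : (1 + a₂ / (2 * π)) * (π / n) < π / 2 := by
      have e : (1 + a₂ / (2 * π)) * (π / n) = (2 * π + a₂) / (2 * n) := by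
        field_simp
      rw [e, div_lt_div_iff₀ (by positivity) (by norm_num)]
      nlinarith
    have hk₁θ : (1 + a₁ / (2 * π)) * (π / n) < (1 + a₂ / (2 * π)) * (π / n) :=
      mul_lt_mul_of_pos_right hkk hθ
    have hc₂ : 0 < Real.cos ((1 + a₂ / (2 * π)) * (π / n)) := by
      apply Real.cos_pos_of_mem_Ioo
      constructor
      · have : 0 ≤ (1 + a₂ / (2 * π)) * (π / n) := mul_nonneg (by linarith) hθ.le
        linarith
      · exact hk₂θ
    have hcc : Real.cos ((1 + a₂ / (2 * π)) * (π / n)) <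
        Real.cos ((1 + a₁ / (2 * π)) * (π / n)) := by
      apply Real.cos_lt_cos_of_nonneg_of_le_pi (mul_nonneg (by linarith) hθ.le)
      · linarith
      · exact hk₁θ
    have hc₁ : 0 < Real.cos ((1 + a₁ / (2 * π)) * (π / n)) := hc₂.trans hcc
    have hcθ : 0 < Real.cos (π / n) := by
      apply Real.cos_pos_of_mem_Ioo
      constructor
      · linarith
      · calc π / n < (1 + a₂ / (2 * π)) * (π / n) := by nlinarith [mul_pos hd2 hθ]
          _ < π / 2 := hk₂θ
    have hx1 : 1 ≤ Real.cos (π / n) / Real.cos ((1 + a₁ / (2 * π)) * (π / n)) := by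
      rw [one_le_div hc₁]
      apply Real.cos_le_cos_of_nonneg_of_le_pi hθ.le
      · linarith
      · nlinarith [mul_nonneg hd1 hθ.le]
    have hxy : Real.cos (π / n) / Real.cos ((1 + a₁ / (2 * π)) * (π / n)) <
        Real.cos (π / n) / Real.cos ((1 + a₂ / (2 * π)) * (π / n)) :=
      div_lt_div_of_pos_left hcθ hc₂ hcc
    rw [Perim_eq hn0, Perim_eq hn0]
    exact mul_lt_mul_of_pos_left (arcosh_lt_arcosh hx1 hxy) (by positivity)
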